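/- The family (f_g)_{g≥1} is a ℚ-basis of the subspace of symmetric Laurent polynomials: for every G ∈ ℚ[q,q⁻¹] with ι(G) = G there exist rational numbers a_g, all but finitely many equal to zero, such that G = Σ_{g≥1} a_g f_g(q), and these a_g are uniquely determined by G. -/

import Mathlib

open LaurentPolynomial

noncomputable section

open Polynomial in
/-- The symmetric Laurent polynomial `u = q^{-1}(1+q)^2 = q + 2 + q^{-1}`. -/
def uL : LaurentPolynomial ℚ := T (-1) * (1 + T 1) ^ 2

lemma uL_pow (k : ℕ) : uL ^ k = T (-(k:ℤ)) * (1 + T 1) ^ (2*k) := by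
  rw [uL, mul_pow, ← pow_mul, T_pow]
  ring_nf

lemma T_mul_apply (a : ℤ) (f : LaurentPolynomial ℚ) (m : ℤ) :
    (T a * f : LaurentPolynomial ℚ).coeff m = f.coeff (m - a) := by
  have := AddMonoidAlgebra.coeff_single_mul_apply f (1:ℚ) a m
  simpa [sub_eq_neg_add] using this

lemma C_mul_apply (c : ℚ) (f : LaurentPolynomial ℚ) (m : ℤ) :
    (LaurentPolynomial.C c * f : LaurentPolynomial ℚ).coeff m = c * f.coeff m :=
  AddMonoidAlgebra.coeff_single_zero_mul f c m

open Polynomial in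
lemma toLaurent_apply' (p : ℚ[X]) (m : ℤ) :
    (Polynomial.toLaurent p).coeff m = if 0 ≤ m then p.coeff m.toNat else 0 := by
  rw [LaurentPolynomial.coeff_toLaurent]
  split_ifs with h
  · obtain ⟨n, rfl⟩ := Int.eq_ofNat_of_zero_le h
    erw [Finsupp.mapDomain_apply Nat.castEmbedding.injective]
    rfl
  · rw [Finsupp.mapDomain_notin_range]
    rintro ⟨n, rfl⟩
    exact h (Int.ofNat_nonneg n)

open Polynomial in
lemma one_add_T_pow (n : ℕ) :
    ((1 + T 1 : LaurentPolynomial ℚ) ^ n) = Polynomial.toLaurent ((1+X)^n) := by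
  simp [map_pow]

open Polynomial in
lemma uL_pow_apply (k : ℕ) (m : ℤ) :
    (uL ^ k).coeff m = if 0 ≤ m + k then (((2*k).choose (m+k).toNat : ℕ) : ℚ) else 0 := by
  rw [uL_pow, T_mul_apply, one_add_T_pow, toLaurent_apply']
  simp only [sub_neg_eq_add, coeff_one_add_X_pow]

lemma uL_pow_self (k : ℕ) : (uL ^ k).coeff k = 1 := by
  rw [uL_pow_apply]
  simp [show ((k:ℤ) + k).toNat = 2*k by omega]

lemma uL_pow_eq_zero (k : ℕ) (m : ℤ) (h : (k:ℤ) < m) : (uL ^ k).coeff m = 0 := by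
  rw [uL_pow_apply]
  split_ifs with h'
  · rw [Nat.choose_eq_zero_of_lt (by omega)]; simp
  · rfl

lemma invert_uL : invert uL = uL := by
  have h1 : (1 + T (-1) : LaurentPolynomial ℚ) = T (-1) * (1 + T 1) := by
    rw [mul_add, mul_one, ← T_add]
    norm_num [add_comm, T_zero]
  rw [uL, map_mul, map_pow, invert_T, map_add, map_one, invert_T, neg_neg, h1]
  rw [mul_pow, show (T (-1):LaurentPolynomial ℚ)^2 = T (-2) by rw [T_pow]; norm_num]
  rw [← mul_assoc, ← T_add]
  norm_num

lemma uL_pow_symm (k : ℕ) (m : ℤ) : (uL ^ k).coeff m = (uL ^ k).coeff (-m) := by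
  have : invert (uL ^ k) = uL ^ k := by rw [map_pow, invert_uL]
  conv_lhs => rw [← this]
  rw [invert_apply]

open Polynomial in
lemma exists_poly (n : ℕ) : ∀ G : LaurentPolynomial ℚ, invert G = G →
    (∀ m ∈ G.coeff.support, m.natAbs ≤ n) → ∃ P : ℚ[X], G = Polynomial.aeval uL P := by
  induction n with
  | zero =>
    intro G _ hsupp
    refine ⟨Polynomial.C (G.coeff 0), ?_⟩
    rw [Polynomial.aeval_C, ← LaurentPolynomial.C_eq_algebraMap]
    ext m
    rcases eq_or_ne m 0 with rfl | hm
    · simp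
    · rw [LaurentPolynomial.C_apply, if_neg hm]
      by_contra h
      exact hm (Int.natAbs_eq_zero.mp (Nat.le_zero.mp (hsupp m
        (Finsupp.mem_support_iff.mpr h))))
  | succ n ih =>
    intro G hG hsupp
    set c := G.coeff ((n:ℤ)+1) with hc
    have hGsym : ∀ m : ℤ, G.coeff m = G.coeff (-m) := by
      intro m
      conv_lhs => rw [← hG]
      rw [invert_apply]
    have hsupp' : ∀ m : ℤ, (n:ℕ) + 1 < m.natAbs → G.coeff m = 0 := by
      intro m hm
      by_contra h
      exact absurd (hsupp m (Finsupp.mem_support_iff.mpr h)) (by omega)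
    set G' := G - LaurentPolynomial.C c * uL ^ (n+1) with hG'
    have hG'sym : invert G' = G' := by
      rw [hG', map_sub, hG, map_mul, LaurentPolynomial.invert_C, map_pow, invert_uL]
    have hG'supp : ∀ m ∈ G'.coeff.support, m.natAbs ≤ n := by
      intro m hm
      by_contra h
      apply Finsupp.mem_support_iff.mp hm
      have happ : G'.coeff m = G.coeff m - c * (uL ^ (n+1)).coeff m := by
        rw [hG', AddMonoidAlgebra.coeff_sub, Finsupp.sub_apply, C_mul_apply]
      rcases lt_trichotomy m.natAbs (n+1+1) with h1 | h1 | h1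
      · have hm' : m.natAbs = n+1 := by omega
        rcases Int.natAbs_eq m with h2 | h2
        · have : m = (n:ℤ)+1 := by omega
          subst this
          rw [happ, ← hc, show ((n:ℤ)+1) = ((n+1 : ℕ) : ℤ) by push_cast; ring,
            uL_pow_self]
          ring
        · have : m = -((n:ℤ)+1) := by omega
          subst this
          rw [happ, hGsym, neg_neg, ← hc,
            uL_pow_symm, neg_neg,
            show ((n:ℤ)+1) = ((n+1 : ℕ) : ℤ) by push_cast; ring, uL_pow_self]
          ring
      · rw [happ, hsupp' m (by omega)]
        have : (uL ^ (n+1)).coeff m = 0 := by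
          rcases le_or_gt 0 m with h3 | h3
          · exact uL_pow_eq_zero _ _ (by omega)
          · rw [uL_pow_symm]
            exact uL_pow_eq_zero _ _ (by omega)
        rw [this]; ring
      · rw [happ, hsupp' m (by omega)]
        have : (uL ^ (n+1)).coeff m = 0 := by
          rcases le_or_gt 0 m with h3 | h3
          · exact uL_pow_eq_zero _ _ (by omega)
          · rw [uL_pow_symm]
            exact uL_pow_eq_zero _ _ (by omega)
        rw [this]; ring
    obtain ⟨P, hP⟩ := ih G' hG'sym hG'supp
    refine ⟨P + Polynomial.C c * X^(n+1), ?_⟩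
    rw [map_add, map_mul, Polynomial.aeval_C, Polynomial.aeval_X_pow, ← hP,
      ← LaurentPolynomial.C_eq_algebraMap, hG']
    ring

open Polynomial in
lemma aeval_uL_eq_zero {P : ℚ[X]} (h : Polynomial.aeval uL P = 0) : P = 0 := by
  by_contra hP
  have key : (Polynomial.aeval uL P).coeff (P.natDegree : ℤ) = P.leadingCoeff := by
    rw [Polynomial.aeval_eq_sum_range]
    rw [AddMonoidAlgebra.coeff_sum, Finsupp.finset_sum_apply]
    rw [Finset.sum_eq_single P.natDegree]
    · rw [AddMonoidAlgebra.coeff_smul_apply, uL_pow_self, smul_eq_mul, mul_one,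
        Polynomial.leadingCoeff]
    · intro i hi hne
      have hi' : i < P.natDegree := by
        simp only [Finset.mem_range] at hi; omega
      rw [AddMonoidAlgebra.coeff_smul_apply, uL_pow_eq_zero _ _ (by exact_mod_cast hi'), smul_zero]
    · intro h'
      exact absurd (Finset.self_mem_range_succ P.natDegree) h'
  rw [h] at key
  exact hP (Polynomial.leadingCoeff_eq_zero.mp (by simpa using key.symm))

open Polynomial in
lemma aeval_uL_injective :
    Function.Injective (Polynomial.aeval uL : ℚ[X] → LaurentPolynomial ℚ) := by
  intro P Q h
  have : Polynomial.aeval uL (P - Q) = 0 := by rw [map_sub, h, sub_self]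
  exact sub_eq_zero.mp (aeval_uL_eq_zero this)

/-- `f_g(q) = q^{1-g} (1+q)^{2g-2}` as a Laurent polynomial over `ℚ`. -/
def fL (g : ℕ) : LaurentPolynomial ℚ := T (1 - (g : ℤ)) * (1 + T 1) ^ (2 * g - 2)

lemma fL_eq {g : ℕ} (hg : 1 ≤ g) : fL g = uL ^ (g - 1) := by
  rw [uL, mul_pow, ← pow_mul, T_pow,
    show ((g-1 : ℕ) : ℤ) * -1 = 1 - (g:ℤ) by omega,
    show 2 * (g-1) = 2*g - 2 by omega, fL]

def succEmb : ℕ ↪ ℕ := ⟨Nat.succ, Nat.succ_injective⟩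

open Polynomial in
lemma key_lemma (a : ℕ →₀ ℚ) (ha : ∀ g ∈ a.support, 1 ≤ g) :
    ∃ P : ℚ[X], (a.sum fun g c => c • fL g) = Polynomial.aeval uL P ∧
      ∀ k, P.coeff k = a (k + 1) := by
  refine ⟨∑ g ∈ a.support, Polynomial.C (a g) * X ^ (g - 1), ?_, ?_⟩
  · rw [map_sum, Finsupp.sum]
    refine Finset.sum_congr rfl fun g hg => ?_
    rw [map_mul, Polynomial.aeval_C, Polynomial.aeval_X_pow, fL_eq (ha g hg),
      Algebra.smul_def]
  · intro k
    rw [Polynomial.finset_sum_coeff]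
    have : ∀ g ∈ a.support,
        (Polynomial.C (a g) * X ^ (g - 1)).coeff k = if g = k + 1 then a g else 0 := by
      intro g hg
      rw [Polynomial.coeff_C_mul, Polynomial.coeff_X_pow]
      have h1 := ha g hg
      by_cases h : g = k + 1
      · rw [if_pos h, if_pos (by omega), mul_one]
      · rw [if_neg h, if_neg (by omega), mul_zero]
    rw [Finset.sum_congr rfl this, Finset.sum_ite_eq' a.support (k+1) a]
    split_ifs with h
    · rfl
    · exact (Finsupp.notMem_support_iff.mp h).symm

/-- The family `(f_g)_{g ≥ 1}` is a `ℚ`-basis of the space of symmetric Laurent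
polynomials: every `G ∈ ℚ[q,q⁻¹]` with `ι(G) = G` (where `ι` is the `ℚ`-algebra
automorphism with `ι(q) = q⁻¹`, i.e. `LaurentPolynomial.invert`) can be written
uniquely as a finitely supported sum `G = ∑_{g ≥ 1} a_g • f_g`. -/
theorem stmt2 (G : LaurentPolynomial ℚ) (hG : invert G = G) :
    ∃! a : ℕ →₀ ℚ, (∀ g ∈ a.support, 1 ≤ g) ∧ G = a.sum fun g c => c • fL g := by
  obtain ⟨P, hP⟩ := exists_poly (G.coeff.support.sup Int.natAbs) G hG
    (fun m hm => Finset.le_sup hm)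
  set a₀ : ℕ →₀ ℚ := Finsupp.embDomain succEmb P.toFinsupp.coeff with ha₀
  have ha₀supp : ∀ g ∈ a₀.support, 1 ≤ g := by
    intro g hg
    rw [ha₀, Finsupp.support_embDomain, Finset.mem_map] at hg
    obtain ⟨k, _, rfl⟩ := hg
    exact Nat.le_add_left 1 k
  have ha₀app : ∀ k, a₀ (k + 1) = P.coeff k := fun k =>
    Finsupp.embDomain_apply_self succEmb P.toFinsupp.coeff k
  have ha₀zero : a₀ 0 = 0 := by
    by_contra h
    exact absurd (ha₀supp 0 (Finsupp.mem_support_iff.mpr h)) (by omega)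
  obtain ⟨P', hP', hP'c⟩ := key_lemma a₀ ha₀supp
  have hPP' : P' = P := Polynomial.ext fun k => by rw [hP'c k, ha₀app k]
  refine ⟨a₀, ⟨ha₀supp, by rw [hP', hPP', hP]⟩, ?_⟩
  rintro b ⟨hbsupp, hbsum⟩
  obtain ⟨Q, hQ, hQc⟩ := key_lemma b hbsupp
  have hQP : Q = P := aeval_uL_injective (by rw [← hQ, ← hbsum, hP])
  have hbzero : b 0 = 0 := by
    by_contra h
    exact absurd (hbsupp 0 (Finsupp.mem_support_iff.mpr h)) (by omega)
  ext g
  cases g with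
  | zero => rw [hbzero, ha₀zero]
  | succ k => rw [← hQc k, hQP, ← ha₀app k]

end
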